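/- Let A be a locally finite hyperplane arrangement in ℝⁿ and fix a chamber C. The map η̃_C sending a Salvetti cell ⟨D,F⟩ ∈ S(C) to the chamber D^F opposite to D with respect to F is order-preserving from S(C) (with the order induced from the Salvetti poset) to the tope poset (C(A), ≤_C), where D' ≤_C D iff s(C,D') ⊆ s(C,D). -/

import Mathlib

open Metric Set MeasureTheory

noncomputable section

/-- A locally finite arrangement of affine hyperplanes in ℝⁿ, given by affine
equations `⟪a i, x⟫ = b i` with `a i ≠ 0`, indexed injectively by `ι`. -/
structure Arrangement (n : ℕ) (ι : Type) where
  a : ι → EuclideanSpace ℝ (Fin n)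
  b : ι → ℝ
  ha : ∀ i, a i ≠ 0
  inj : Function.Injective fun i => {x : EuclideanSpace ℝ (Fin n) | (inner ℝ (a i) x : ℝ) = b i}
  locFin : ∀ x : EuclideanSpace ℝ (Fin n), ∃ ε > 0,
    {i : ι | ∃ y ∈ Metric.ball x ε, (inner ℝ (a i) y : ℝ) = b i}.Finite

namespace Arrangement

variable {n : ℕ} {ι : Type} (A : Arrangement n ι)

/-- The defining affine functional of the `i`-th hyperplane. -/
def val (i : ι) (x : EuclideanSpace ℝ (Fin n)) : ℝ := (inner ℝ (A.a i) x : ℝ) - A.b i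

/-- The `i`-th hyperplane. -/
def hyperplane (i : ι) : Set (EuclideanSpace ℝ (Fin n)) := {x | A.val i x = 0}

/-- The sign vector of a point. -/
def signAt (x : EuclideanSpace ℝ (Fin n)) : ι → SignType := fun i => SignType.sign (A.val i x)

/-- The (relatively open) stratum with sign vector `σ`. -/
def openCell (σ : ι → SignType) : Set (EuclideanSpace ℝ (Fin n)) :=
  {x | ∀ i, SignType.sign (A.val i x) = σ i}

/-- The (closed) faces of the arrangement: closures of the strata. -/
def IsFace (F : Set (EuclideanSpace ℝ (Fin n))) : Prop :=
  ∃ x : EuclideanSpace ℝ (Fin n), F = closure (A.openCell (A.signAt x))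

/-- Chambers: closed faces of codimension 0. -/
def IsChamber (C : Set (EuclideanSpace ℝ (Fin n))) : Prop :=
  ∃ x : EuclideanSpace ℝ (Fin n), (∀ i, A.val i x ≠ 0) ∧
    C = closure (A.openCell (A.signAt x))

/-- The support of a subset: the hyperplanes containing it. -/
def supp (U : Set (EuclideanSpace ℝ (Fin n))) : Set ι := {i | U ⊆ A.hyperplane i}

/-- The set of hyperplanes separating two chambers. -/
def sep (C C' : Set (EuclideanSpace ℝ (Fin n))) : Set ι :=
  {i | ∀ x ∈ interior C, ∀ y ∈ interior C', A.val i x * A.val i y < 0}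

/-- `F` is a face of the chamber (or face) `C`. -/
def IsFaceOf (F C : Set (EuclideanSpace ℝ (Fin n))) : Prop := A.IsFace F ∧ F ⊆ C

/-- `A.IsCF C F D` means `D = C.F`: `D` is the unique chamber containing `F` and not
separated from `C` by any hyperplane of `supp F`. -/
def IsCF (C F D : Set (EuclideanSpace ℝ (Fin n))) : Prop :=
  A.IsChamber D ∧ F ⊆ D ∧ A.sep C D ∩ A.supp F = ∅

/-- `A.IsOpp D F E` means `E = D^F`: `E` is the chamber opposite to `D` with respect to
its face `F`, i.e. the hyperplanes separating `D` and `E` are exactly those containing `F`. -/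
def IsOpp (D F E : Set (EuclideanSpace ℝ (Fin n))) : Prop :=
  A.IsChamber E ∧ F ⊆ E ∧ A.sep D E = A.supp F

/-- Flats: nonempty intersections of subfamilies of hyperplanes (including ℝⁿ itself). -/
def IsFlat (X : Set (EuclideanSpace ℝ (Fin n))) : Prop :=
  X.Nonempty ∧ ∃ s : Set ι, X = ⋂ i ∈ s, A.hyperplane i

/-- A cell `⟨C, F⟩` of the Salvetti complex: a chamber `C` together with a face `F` of `C`. -/
structure Cell {n : ℕ} {ι : Type} (𝒜 : Arrangement n ι) where
  C : Set (EuclideanSpace ℝ (Fin n))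
  F : Set (EuclideanSpace ℝ (Fin n))
  isChamber : 𝒜.IsChamber C
  isFace : 𝒜.IsFace F
  faceLe : F ⊆ C

/-- The Salvetti order: `⟨C,F⟩ ≤ ⟨D,G⟩` iff `F ⪯ G` (i.e. `F ⊇ G`) and `D.F = C`. -/
def cellLE (c d : A.Cell) : Prop := d.F ⊆ c.F ∧ A.IsCF d.C c.F c.C

/-- The subcomplex `S(C)`: cells `⟨D,F⟩` with `D = C.F`. -/
def inS (C : Set (EuclideanSpace ℝ (Fin n))) (c : A.Cell) : Prop := A.IsCF C c.F c.C

/-- A strict total order on the chambers. -/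
def IsChamberOrder (lt : Set (EuclideanSpace ℝ (Fin n)) → Set (EuclideanSpace ℝ (Fin n)) → Prop) :
    Prop :=
  (∀ C C', A.IsChamber C → A.IsChamber C' → C ≠ C' → lt C C' ∨ lt C' C) ∧
  (∀ C, ¬ lt C C) ∧
  (∀ C C' C'', lt C C' → lt C' C'' → lt C C'')

/-- The upper ideal `J(C)` of the poset of flats determined by a total order on chambers. -/
def J (lt : Set (EuclideanSpace ℝ (Fin n)) → Set (EuclideanSpace ℝ (Fin n)) → Prop)
    (C : Set (EuclideanSpace ℝ (Fin n))) : Set (Set (EuclideanSpace ℝ (Fin n))) :=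
  {X | A.IsFlat X ∧ ∀ C', A.IsChamber C' → lt C' C → (A.supp X ∩ A.sep C C').Nonempty}

/-- A valid order: for each chamber `C`, the ideal `J(C)` is the principal upper ideal
(in the poset of flats ordered by reverse inclusion) generated by `X_C = |F_C|` for some
face `F_C` of `C`. -/
def IsValidOrder
    (lt : Set (EuclideanSpace ℝ (Fin n)) → Set (EuclideanSpace ℝ (Fin n)) → Prop) : Prop :=
  A.IsChamberOrder lt ∧
  ∀ C, A.IsChamber C → ∃ F_C, A.IsFaceOf F_C C ∧
    A.J lt C = {X | A.IsFlat X ∧ X ⊆ (affineSpan ℝ F_C : Set (EuclideanSpace ℝ (Fin n)))}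

/-- Membership in `N(C)`: cells of `S(C)` not lying in any earlier `S(C')`. -/
def inN (lt : Set (EuclideanSpace ℝ (Fin n)) → Set (EuclideanSpace ℝ (Fin n)) → Prop)
    (C : Set (EuclideanSpace ℝ (Fin n))) (c : A.Cell) : Prop :=
  A.inS C c ∧ ∀ C', A.IsChamber C' → lt C' C → ¬ A.inS C' c

/-- A point `x₀` is generic with respect to `A`: (i) chambers at equal distance from `x₀`
have the same metric projection of `x₀`, lying in their intersection; (ii) distances to
strictly comparable flats are strictly comparable. -/
def IsGeneric (x₀ : EuclideanSpace ℝ (Fin n)) : Prop :=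
  (∀ C C', A.IsChamber C → A.IsChamber C' → infDist x₀ C = infDist x₀ C' →
    ∀ p ∈ C, ∀ p' ∈ C', (∀ q ∈ C, dist x₀ p ≤ dist x₀ q) →
      (∀ q ∈ C', dist x₀ p' ≤ dist x₀ q) → p = p' ∧ p ∈ C ∩ C') ∧
  (∀ L L', A.IsFlat L → A.IsFlat L' → L' ⊂ L → infDist x₀ L < infDist x₀ L')

end Arrangement

section Aux

open SignType

lemma aux_interior_closure {E : Type*} [NormedAddCommGroup E] [NormedSpace ℝ E] {s : Set E}
    (hs : Convex ℝ s) (ho : IsOpen s) : interior (closure s) ⊆ s := by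
  intro p hp
  rcases s.eq_empty_or_nonempty with h | ⟨x, hx⟩
  · simp [h] at hp
  by_cases hpx : p = x
  · rwa [hpx]
  rcases Metric.isOpen_iff.1 isOpen_interior p hp with ⟨r, hr, hball⟩
  have hnorm : (0:ℝ) < ‖p - x‖ := by
    simpa [sub_eq_zero] using hpx
  set t : ℝ := r / (2 * ‖p - x‖) with ht
  have htpos : 0 < t := by positivity
  set q : E := p + t • (p - x) with hq
  have hqcl : q ∈ closure s := by
    have : q ∈ Metric.ball p r := by
      have : dist q p = t * ‖p - x‖ := by
        simp [hq, dist_eq_norm, norm_smul, abs_of_pos htpos]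
      rw [Metric.mem_ball, this, ht, div_mul_eq_mul_div, div_lt_iff₀ (by positivity)]
      nlinarith
    exact interior_subset (hball this)
  have hxint : x ∈ interior s := by rwa [ho.interior_eq]
  have h1t : (1:ℝ) + t ≠ 0 := by positivity
  have hab : t / (1 + t) + 1 / (1 + t) = 1 := by
    field_simp
    ring
  have hmem := hs.combo_interior_closure_mem_interior hxint hqcl
      (by positivity : (0:ℝ) < t / (1 + t)) (by positivity : (0:ℝ) ≤ 1 / (1 + t)) hab
  have hcombo : (t / (1 + t)) • x + (1 / (1 + t)) • q = p := by
    rw [hq]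
    match_scalars <;> field_simp <;> ring
  rw [hcombo] at hmem
  rw [← ho.interior_eq]
  exact hmem

lemma aux_sign_mul_neg {x y : ℝ} (hx : x ≠ 0) (hy : y ≠ 0) :
    x * y < 0 ↔ SignType.sign x ≠ SignType.sign y := by
  rcases hx.lt_or_gt with h | h <;> rcases hy.lt_or_gt with h' | h'
  · simp [sign_neg h, sign_neg h', not_lt.2 (mul_pos_of_neg_of_neg h h').le]
  · simp [sign_neg h, sign_pos h', mul_neg_of_neg_of_pos h h']
  · simp [sign_pos h, sign_neg h', mul_neg_of_pos_of_neg h h']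
  · simp [sign_pos h, sign_pos h', not_lt.2 (mul_pos h h').le]

namespace Arrangement

variable {n : ℕ} {ι : Type} (A : Arrangement n ι)

lemma val_continuous (i : ι) : Continuous (A.val i) := by
  unfold val
  exact (continuous_const.inner continuous_id).sub continuous_const

lemma mem_openCell_self (x : EuclideanSpace ℝ (Fin n)) : x ∈ A.openCell (A.signAt x) :=
  fun _ => rfl

lemma isLinearMap_inner (a : EuclideanSpace ℝ (Fin n)) :
    IsLinearMap ℝ (fun x : EuclideanSpace ℝ (Fin n) => (inner ℝ a x : ℝ)) :=
  ⟨fun x y => inner_add_right a x y, fun c x => real_inner_smul_right a x c⟩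

lemma convex_openCell (τ : ι → SignType) : Convex ℝ (A.openCell τ) := by
  have : A.openCell τ = ⋂ i, {x | SignType.sign (A.val i x) = τ i} := by
    ext x; simp [openCell, Set.mem_iInter]
  rw [this]
  refine convex_iInter fun i => ?_
  rcases h : τ i with _ | _ | _
  · have : {x | SignType.sign (A.val i x) = SignType.zero} =
        {x : EuclideanSpace ℝ (Fin n) | (inner ℝ (A.a i) x : ℝ) = A.b i} := by
      ext x; simp [sign_eq_zero_iff, val, sub_eq_zero]
    rw [this]
    exact convex_hyperplane (isLinearMap_inner (A.a i)) (A.b i)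
  · have : {x | SignType.sign (A.val i x) = SignType.neg} =
        {x : EuclideanSpace ℝ (Fin n) | (inner ℝ (A.a i) x : ℝ) < A.b i} := by
      ext x; simp [sign_eq_neg_one_iff, val, sub_neg]
    rw [this]
    exact convex_halfSpace_lt (isLinearMap_inner (A.a i)) (A.b i)
  · have : {x | SignType.sign (A.val i x) = SignType.pos} =
        {x : EuclideanSpace ℝ (Fin n) | A.b i < (inner ℝ (A.a i) x : ℝ)} := by
      ext x; simp [sign_eq_one_iff, val, sub_pos]
    rw [this]
    exact convex_halfSpace_gt (isLinearMap_inner (A.a i)) (A.b i)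

lemma sign_const_on (i : ι) {s : Set (EuclideanSpace ℝ (Fin n))} (hconv : Convex ℝ s)
    (hne : ∀ z ∈ s, A.val i z ≠ 0) {x y : EuclideanSpace ℝ (Fin n)}
    (hx : x ∈ s) (hy : y ∈ s) : SignType.sign (A.val i x) = SignType.sign (A.val i y) := by
  by_contra h
  have hiv := hconv.isPreconnected.intermediate_value hx hy
      ((A.val_continuous i).continuousOn (s := s))
  have hiv' := hconv.isPreconnected.intermediate_value hy hx
      ((A.val_continuous i).continuousOn (s := s))
  have h0 : (0:ℝ) ∈ A.val i '' s := by
    rcases (hne x hx).lt_or_gt with h1 | h1 <;> rcases (hne y hy).lt_or_gt with h2 | h2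
    · exact absurd (by rw [sign_neg h1, sign_neg h2]) h
    · exact hiv ⟨h1.le, h2.le⟩
    · exact hiv' ⟨h2.le, h1.le⟩
    · exact absurd (by rw [sign_pos h1, sign_pos h2]) h
  rcases h0 with ⟨z, hz, hz0⟩
  exact hne z hz hz0

lemma isOpen_signSet (i : ι) (s : SignType) (hs : s ≠ 0) :
    IsOpen {y : EuclideanSpace ℝ (Fin n) | SignType.sign (A.val i y) = s} := by
  rcases h : s with _ | _ | _
  · exact absurd rfl (h ▸ hs)
  · have : {y : EuclideanSpace ℝ (Fin n) | SignType.sign (A.val i y) = SignType.neg} =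
        A.val i ⁻¹' Set.Iio 0 := by
      ext y; simp [sign_eq_neg_one_iff]
    rw [this]; exact isOpen_Iio.preimage (A.val_continuous i)
  · have : {y : EuclideanSpace ℝ (Fin n) | SignType.sign (A.val i y) = SignType.pos} =
        A.val i ⁻¹' Set.Ioi 0 := by
      ext y; simp [sign_eq_one_iff]
    rw [this]; exact isOpen_Ioi.preimage (A.val_continuous i)

lemma isOpen_openCell {σ : ι → SignType} (hσ : ∀ i, σ i ≠ 0) : IsOpen (A.openCell σ) := by
  rw [isOpen_iff_mem_nhds]
  intro p hp
  obtain ⟨ε, hε, hfin⟩ := A.locFin p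
  rw [_root_.mem_nhds_iff]
  refine ⟨Metric.ball p ε ∩ ⋂ i ∈ {i : ι | ∃ y ∈ Metric.ball p ε, (inner ℝ (A.a i) y : ℝ) = A.b i},
      {y | SignType.sign (A.val i y) = σ i}, ?_, ?_, ?_, ?_⟩
  · rintro y ⟨hyball, hyU⟩ i
    by_cases hi : i ∈ {i : ι | ∃ y ∈ Metric.ball p ε, (inner ℝ (A.a i) y : ℝ) = A.b i}
    · exact (Set.mem_iInter₂.1 hyU i hi)
    · have hne : ∀ z ∈ Metric.ball p ε, A.val i z ≠ 0 := by
        intro z hz hz0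
        exact hi ⟨z, hz, by simpa [val, sub_eq_zero] using hz0⟩
      have := A.sign_const_on i (convex_ball p ε) hne hyball (Metric.mem_ball_self hε)
      rw [this]; exact hp i
  · exact (Metric.isOpen_ball).inter (hfin.isOpen_biInter fun i _ => A.isOpen_signSet i (σ i) (hσ i))
  · exact Metric.mem_ball_self hε
  · exact Set.mem_iInter₂.2 fun i _ => hp i

lemma val_eq_zero_of_mem_closure {τ : ι → SignType} {i : ι} (hi : τ i = 0)
    {p : EuclideanSpace ℝ (Fin n)} (hp : p ∈ closure (A.openCell τ)) : A.val i p = 0 := by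
  have hsub : A.openCell τ ⊆ {x | A.val i x = 0} := by
    intro x hx
    have := hx i
    rw [hi, sign_eq_zero_iff] at this
    exact this
  have hcl : IsClosed {x : EuclideanSpace ℝ (Fin n) | A.val i x = 0} :=
    isClosed_singleton.preimage (A.val_continuous i)
  exact closure_minimal hsub hcl hp

lemma sign_mem_closure (τ : ι → SignType) (i : ι)
    {p : EuclideanSpace ℝ (Fin n)} (hp : p ∈ closure (A.openCell τ)) :
    SignType.sign (A.val i p) = τ i ∨ A.val i p = 0 := by
  rcases h : τ i with _ | _ | _
  · exact Or.inr (A.val_eq_zero_of_mem_closure h hp)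
  · have hsub : A.openCell τ ⊆ {x | A.val i x ≤ 0} := by
      intro x hx
      have h2 : SignType.sign (A.val i x) = -1 := by rw [hx i, h]; rfl
      exact Set.mem_setOf.2 (sign_eq_neg_one_iff.1 h2).le
    have hcl : IsClosed {x : EuclideanSpace ℝ (Fin n) | A.val i x ≤ 0} :=
      isClosed_Iic.preimage (A.val_continuous i)
    have hle : A.val i p ≤ 0 := closure_minimal hsub hcl hp
    rcases hle.lt_or_eq with h' | h'
    · exact Or.inl (sign_neg h')
    · exact Or.inr h'
  · have hsub : A.openCell τ ⊆ {x | 0 ≤ A.val i x} := by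
      intro x hx
      have h2 : SignType.sign (A.val i x) = 1 := by rw [hx i, h]; rfl
      exact Set.mem_setOf.2 (sign_eq_one_iff.1 h2).le
    have hcl : IsClosed {x : EuclideanSpace ℝ (Fin n) | 0 ≤ A.val i x} :=
      isClosed_Ici.preimage (A.val_continuous i)
    have hle : 0 ≤ A.val i p := closure_minimal hsub hcl hp
    rcases hle.lt_or_eq with h' | h'
    · exact Or.inl (sign_pos h')
    · exact Or.inr h'.symm

lemma interior_chamber {x : EuclideanSpace ℝ (Fin n)} (hx : ∀ i, A.val i x ≠ 0) :
    interior (closure (A.openCell (A.signAt x))) = A.openCell (A.signAt x) := by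
  have hσ : ∀ i, A.signAt x i ≠ 0 := by
    intro i h
    exact hx i (sign_eq_zero_iff.1 h)
  have ho := A.isOpen_openCell hσ
  apply Set.Subset.antisymm
  · exact aux_interior_closure (A.convex_openCell _) ho
  · exact ho.subset_interior_iff.2 subset_closure

lemma sep_eq {x y : EuclideanSpace ℝ (Fin n)} (hx : ∀ i, A.val i x ≠ 0)
    (hy : ∀ i, A.val i y ≠ 0) :
    A.sep (closure (A.openCell (A.signAt x))) (closure (A.openCell (A.signAt y))) =
      {i | A.signAt x i ≠ A.signAt y i} := by
  ext i
  rw [sep, Set.mem_setOf, Set.mem_setOf, A.interior_chamber hx, A.interior_chamber hy]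
  constructor
  · intro h
    have := h x (A.mem_openCell_self x) y (A.mem_openCell_self y)
    exact (aux_sign_mul_neg (hx i) (hy i)).1 this
  · intro h p hp q hq
    have hp' : SignType.sign (A.val i p) = A.signAt x i := hp i
    have hq' : SignType.sign (A.val i q) = A.signAt y i := hq i
    have hpne : A.val i p ≠ 0 := by
      intro h0
      apply hx i
      have h1 : A.signAt x i = 0 := by rw [← hp', h0, sign_zero]
      exact sign_eq_zero_iff.1 h1
    have hqne : A.val i q ≠ 0 := by
      intro h0
      apply hy i
      have h1 : A.signAt y i = 0 := by rw [← hq', h0, sign_zero]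
      exact sign_eq_zero_iff.1 h1
    refine (aux_sign_mul_neg hpne hqne).2 ?_
    rw [hp', hq']
    exact h

lemma supp_face (f : EuclideanSpace ℝ (Fin n)) :
    A.supp (closure (A.openCell (A.signAt f))) = {i | A.val i f = 0} := by
  ext i
  constructor
  · intro hi
    have hf : f ∈ closure (A.openCell (A.signAt f)) := subset_closure (A.mem_openCell_self f)
    exact hi hf
  · intro hi
    have hsub : A.openCell (A.signAt f) ⊆ A.hyperplane i := by
      intro p hp
      have := hp i
      rw [show A.signAt f i = 0 from sign_eq_zero_iff.2 hi, sign_eq_zero_iff] at this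
      exact this
    have hcl : IsClosed (A.hyperplane i) := isClosed_singleton.preimage (A.val_continuous i)
    exact closure_minimal hsub hcl

end Arrangement

end Aux



/-- The map `η̃_C : S(C) → (C(A), ≤_C)`, `⟨D,F⟩ ↦ D^F`, is order-preserving. -/
theorem stmt8 {n : ℕ} {ι : Type} (A : Arrangement n ι)
    (C : Set (EuclideanSpace ℝ (Fin n))) (hC : A.IsChamber C)
    (c c' : A.Cell) (hc : A.inS C c) (hc' : A.inS C c') (hle : A.cellLE c' c)
    (E E' : Set (EuclideanSpace ℝ (Fin n)))
    (hE : A.IsOpp c.C c.F E) (hE' : A.IsOpp c'.C c'.F E') :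
    A.sep C E' ⊆ A.sep C E := by
  obtain ⟨xC, hxC, hCeq⟩ := hC
  obtain ⟨xD, hxD, hDeq⟩ := hc.1
  obtain ⟨xD', hxD', hD'eq⟩ := hc'.1
  obtain ⟨xE, hxE, hEeq⟩ := hE.1
  obtain ⟨xE', hxE', hE'eq⟩ := hE'.1
  obtain ⟨f, hFeq⟩ := c.isFace
  obtain ⟨f', hF'eq⟩ := c'.isFace
  -- membership of witnesses in faces
  have hfF : f ∈ c.F := hFeq ▸ subset_closure (A.mem_openCell_self f)
  have hf'F' : f' ∈ c'.F := hF'eq ▸ subset_closure (A.mem_openCell_self f')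
  -- key hypotheses in sign form
  have hc3 := hc.2.2
  rw [hCeq, hDeq, A.sep_eq hxC hxD, hFeq, A.supp_face] at hc3
  have hE3 := hE.2.2
  rw [hDeq, hEeq, A.sep_eq hxD hxE, hFeq, A.supp_face] at hE3
  have hE'3 := hE'.2.2
  rw [hD'eq, hE'eq, A.sep_eq hxD' hxE', hF'eq, A.supp_face] at hE'3
  have hsuppmono : A.supp c'.F ⊆ A.supp c.F := fun j hj => Set.Subset.trans hle.1 hj
  rw [hFeq, hF'eq, A.supp_face, A.supp_face] at hsuppmono
  intro i hi
  rw [hCeq, hE'eq, A.sep_eq hxC hxE'] at hi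
  have hiCE' : A.signAt xC i ≠ A.signAt xE' i := hi
  rw [hCeq, hEeq, A.sep_eq hxC hxE]
  show A.signAt xC i ≠ A.signAt xE i
  have h2 : A.signAt xD i ≠ A.signAt xE i ↔ A.val i f = 0 := Set.ext_iff.1 hE3 i
  have h2' : A.signAt xD' i ≠ A.signAt xE' i ↔ A.val i f' = 0 := Set.ext_iff.1 hE'3 i
  by_cases hf : A.val i f = 0
  · have hεδ : A.signAt xD i ≠ A.signAt xE i := h2.2 hf
    have hσδ : A.signAt xC i = A.signAt xD i := by
      by_contra hne
      exact Set.eq_empty_iff_forall_notMem.1 hc3 i ⟨hne, hf⟩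
    rw [hσδ]
    exact hεδ
  · have hf' : A.val i f' ≠ 0 := fun h0 => hf (hsuppmono h0)
    have hε'δ' : A.signAt xD' i = A.signAt xE' i := by
      by_contra hne
      exact hf' (h2'.1 hne)
    have hσδ' : A.signAt xC i ≠ A.signAt xD' i := by
      rw [hε'δ']
      exact hiCE'
    have hfD : f ∈ closure (A.openCell (A.signAt xD)) := hDeq ▸ hc.2.1 hfF
    have hfE : f ∈ closure (A.openCell (A.signAt xE)) := hEeq ▸ hE.2.1 hfF
    have hfF' : f ∈ closure (A.openCell (A.signAt f')) := hF'eq ▸ hle.1 hfF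
    have hf'D' : f' ∈ closure (A.openCell (A.signAt xD'))  := hD'eq ▸ hc'.2.1 hf'F'
    have e4 := (A.sign_mem_closure (A.signAt xD) i hfD).resolve_right hf
    have e7 := (A.sign_mem_closure (A.signAt xE) i hfE).resolve_right hf
    have e5 := (A.sign_mem_closure (A.signAt f') i hfF').resolve_right hf
    have e6 := (A.sign_mem_closure (A.signAt xD') i hf'D').resolve_right hf'
    have hEE : A.signAt xE i = A.signAt xD' i := by
      rw [← e7, e5]
      exact e6
    rw [hEE]
    exact hσδ'
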